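/- The measures M_{α,n} on strict partitions of weight n, defined via Kerov operators by M_{α,n}(λ) = (1/Z_n)(Û^n δ_∅, δ_λ)(D̂^n δ_λ, δ_∅) with Z_n = n!(α/2)_n, form a coherent system: for every n ≥ 0 and every strict partition λ of weight n, M_n(λ) = Σ_{κ: κ↘λ} M_{n+1}(κ) · dim_S(λ)/dim_S(κ). -/

import Mathlib

open scoped BigOperators

/-- A strict partition: a strictly decreasing list of positive integers. -/
def SPart : Type := {l : List ℕ // l.Pairwise (· > ·) ∧ ∀ x ∈ l, 0 < x}

namespace SPart

/-- The weight `|λ|`: the sum of the parts. -/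
def weight (lam : SPart) : ℕ := lam.1.sum

/-- The shifted Young diagram of a strict partition: row `k` (1-indexed) has
`λ_k` boxes `(k, j)` with `k ≤ j < k + λ_k`. -/
def diagram (lam : SPart) : Set (ℕ × ℕ) :=
  {p | ∃ k : Fin lam.1.length,
    p.1 = (k : ℕ) + 1 ∧ (k : ℕ) + 1 ≤ p.2 ∧ p.2 < (k : ℕ) + 1 + lam.1.get k}

/-- `AddBox μ λ b`: the shifted diagram of `λ` is obtained from that of `μ` by
adding the single box `b`. -/
def AddBox (mu lam : SPart) (b : ℕ × ℕ) : Prop :=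
  b ∉ mu.diagram ∧ lam.diagram = insert b mu.diagram

/-- `Covers μ λ`: `λ` is obtained from `μ` by adding one box (an edge `μ ↗ λ`
of the Schur graph). -/
def Covers (mu lam : SPart) : Prop := ∃ b, AddBox mu lam b

/-- The empty strict partition. -/
def empty : SPart := ⟨[], List.Pairwise.nil, by simp⟩

end SPart

open Classical

/-- The modified Kerov raising operator `Û`:
`Û·δ_λ = Σ_{κ ↘ λ} 2^{−δ(j−i)}((j−i)(j−i+1)+α)·δ_κ` where `(i,j) = κ/λ`. -/
noncomputable def UhatOp (α : ℂ) (f : SPart → ℂ) : SPart → ℂ := fun kap =>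
  ∑ᶠ p ∈ {p : SPart × (ℕ × ℕ) | SPart.AddBox p.1 kap p.2},
    ((if p.2.2 = p.2.1 then (2 : ℂ)⁻¹ else 1) *
      (((p.2.2 : ℂ) - (p.2.1 : ℂ)) * (((p.2.2 : ℂ) - (p.2.1 : ℂ)) + 1) + α)) * f p.1

/-- The modified Kerov lowering operator `D̂`: `D̂·δ_λ = Σ_{μ ↗ λ} δ_μ`. -/
noncomputable def DhatOp (f : SPart → ℂ) : SPart → ℂ := fun mu =>
  ∑ᶠ p ∈ {p : SPart × (ℕ × ℕ) | SPart.AddBox mu p.1 p.2}, f p.1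

/-- The delta function `δ_λ`. -/
noncomputable def deltaAt (lam : SPart) : SPart → ℂ := fun mu => if mu = lam then 1 else 0

/-- `Z_n = n! (α/2)_n`. -/
noncomputable def Zconst (α : ℂ) (n : ℕ) : ℂ :=
  (Nat.factorial n : ℂ) * (ascPochhammer ℂ n).eval (α / 2)

/-- The measure `M_{α,n}(λ) = Z_n⁻¹ (Ûⁿ δ_∅, δ_λ)(D̂ⁿ δ_λ, δ_∅)`. -/
noncomputable def Mmeas (α : ℂ) (n : ℕ) (lam : SPart) : ℂ :=
  (Zconst α n)⁻¹ * ((UhatOp α)^[n] (deltaAt SPart.empty) lam) *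
    (DhatOp^[n] (deltaAt lam) SPart.empty)

namespace SPart

noncomputable section
open Function Finset

/-- The entry function of a strict partition (0 beyond the length). -/
def pval (lam : SPart) (k : ℕ) : ℕ := lam.1.getD k 0

lemma pval_eq_get (lam : SPart) (k : ℕ) (h : k < lam.1.length) :
    lam.pval k = lam.1.get ⟨k, h⟩ := by
  simp [pval, List.getD_eq_getElem?_getD, List.getElem?_eq_getElem h]

lemma pval_eq_zero (lam : SPart) (k : ℕ) (h : lam.1.length ≤ k) : lam.pval k = 0 := by
  simp [pval, List.getD_eq_getElem?_getD, List.getElem?_eq_none h]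

lemma pval_pos_iff (lam : SPart) (k : ℕ) : 0 < lam.pval k ↔ k < lam.1.length := by
  constructor
  · intro h
    by_contra hk
    rw [pval_eq_zero lam k (by omega)] at h; omega
  · intro h
    rw [pval_eq_get lam k h]
    exact lam.2.2 _ (List.get_mem _ _)

/-- Strictness: if the next entry is positive, it is smaller. -/
lemma pval_step (lam : SPart) (k : ℕ) (h : 0 < lam.pval (k+1)) :
    lam.pval (k+1) < lam.pval k := by
  have hlen : k + 1 < lam.1.length := (pval_pos_iff lam (k+1)).1 h
  have := (List.pairwise_iff_get.1 lam.2.1) ⟨k, by omega⟩ ⟨k+1, hlen⟩ (by simp)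
  rw [pval_eq_get lam k (by omega), pval_eq_get lam (k+1) hlen]
  exact this

lemma pval_inj {lam mu : SPart} (h : lam.pval = mu.pval) : lam = mu := by
  have hlen : lam.1.length = mu.1.length := by
    by_contra hne
    rcases Nat.lt_or_ge lam.1.length mu.1.length with hl | hl
    · have h1 := pval_eq_zero lam lam.1.length le_rfl
      have h2 := (pval_pos_iff mu lam.1.length).2 hl
      rw [← h] at h2; omega
    · rcases Nat.lt_or_ge mu.1.length lam.1.length with hl2 | hl2
      · have h1 := pval_eq_zero mu mu.1.length le_rfl
        have h2 := (pval_pos_iff lam mu.1.length).2 hl2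
        rw [h] at h2; omega
      · omega
  apply Subtype.ext
  apply List.ext_get hlen
  intro i h1 h2
  have := congrFun h i
  rwa [pval_eq_get lam i h1, pval_eq_get mu i h2] at this

/-- Build a strict partition from an entry function. -/
lemma exists_pval (q : ℕ → ℕ) (n : ℕ) (hdec : ∀ k, 0 < q (k+1) → q (k+1) < q k)
    (hz : ∀ k, n ≤ k → q k = 0) : ∃ s : SPart, s.pval = q := by
  have hex : ∃ k, q k = 0 := ⟨n, hz n le_rfl⟩
  set m := Nat.find hex with hm
  have hqm : q m = 0 := Nat.find_spec hex
  have hpos : ∀ k, k < m → 0 < q k := by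
    intro k hk
    have := Nat.find_min hex hk
    omega
  have hzero : ∀ k, m ≤ k → q k = 0 := by
    intro k hk
    induction k with
    | zero =>
      have hm0 : m = 0 := by omega
      rw [hm0] at hqm; exact hqm
    | succ j ih =>
      rcases Nat.lt_or_ge j m with hj | hj
      · have : j + 1 = m ∨ j + 1 < m := by omega
        rcases this with h | h
        · rwa [h]
        · exact absurd (hpos _ h) (by omega)
      · by_contra hc
        have := hdec j (by omega)
        have := ih hj
        omega
  have hstrict : ∀ i j, i < j → j < m → q j < q i := by
    intro i j hij hjm
    induction j with
    | zero => omega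
    | succ j2 ih =>
      have h1 : q (j2+1) < q j2 := hdec j2 (hpos _ hjm)
      rcases Nat.lt_or_ge i j2 with h | h
      · exact lt_trans h1 (ih h (by omega))
      · have : i = j2 := by omega
        rw [this]; exact h1
  refine ⟨⟨(List.range m).map q, ?_, ?_⟩, ?_⟩
  · rw [List.pairwise_iff_get]
    intro i j hij
    have hi : (i : ℕ) < m := by have := i.2; simpa using this
    have hj : (j : ℕ) < m := by have := j.2; simpa using this
    simp only [List.get_eq_getElem, List.getElem_map, List.getElem_range]
    exact hstrict i j hij hj
  · intro x hx
    simp only [List.mem_map, List.mem_range] at hx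
    obtain ⟨k, hk, rfl⟩ := hx
    exact hpos k hk
  · funext k
    show (((List.range m).map q).getD k 0) = q k
    rcases Nat.lt_or_ge k m with hk | hk
    · rw [List.getD_eq_getElem?_getD, List.getElem?_eq_getElem (by simpa using hk)]
      simp
    · rw [List.getD_eq_getElem?_getD, List.getElem?_eq_none (by simpa using hk)]
      simp [hzero k hk]

/-- `k`-th row of `p` admits an added box. -/
def AddAt (p : ℕ → ℕ) (k : ℕ) : Prop := k = 0 ∨ p (k-1) ≥ p k + 2

/-- `k`-th row of `p` admits a removed box. -/
def RemAt (p : ℕ → ℕ) (k : ℕ) : Prop := p k ≥ p (k+1) + 2 ∨ p k = 1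

instance (p : ℕ → ℕ) (k : ℕ) : Decidable (AddAt p k) := by unfold AddAt; infer_instance
instance (p : ℕ → ℕ) (k : ℕ) : Decidable (RemAt p k) := by unfold RemAt; infer_instance

lemma addAt_le {lam : SPart} {k : ℕ} (h : AddAt lam.pval k) : k ≤ lam.1.length := by
  rcases h with h | h
  · omega
  · have : 0 < lam.pval (k-1) := by omega
    have := (pval_pos_iff lam (k-1)).1 this
    omega

lemma remAt_lt {lam : SPart} {k : ℕ} (h : RemAt lam.pval k) : k < lam.1.length := by
  have h1 : 0 < lam.pval k := by rcases h with h | h <;> omega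
  exact (pval_pos_iff lam k).1 h1

lemma remAt_pos {lam : SPart} {k : ℕ} (h : RemAt lam.pval k) : 0 < lam.pval k := by
  rcases h with h | h <;> omega

lemma exists_up (lam : SPart) (k : ℕ) (h : AddAt lam.pval k) :
    ∃ s : SPart, s.pval = Function.update lam.pval k (lam.pval k + 1) := by
  apply exists_pval _ (lam.1.length + k + 1)
  · intro j hj
    rcases eq_or_ne (j+1) k with he | he
    · subst he
      rw [Function.update_self] at hj ⊢
      rw [Function.update_of_ne (by omega : j ≠ j + 1)]
      rcases h with h | h
      · omega
      · simp only [Nat.add_sub_cancel] at h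
        omega
    · rw [Function.update_of_ne he] at hj ⊢
      rcases eq_or_ne j k with rfl | he2
      · rw [Function.update_self]
        have := pval_step lam j hj
        omega
      · rw [Function.update_of_ne he2]
        exact pval_step lam j hj
  · intro j hj
    rw [Function.update_of_ne (by omega)]
    exact pval_eq_zero lam j (by omega)

lemma exists_down (lam : SPart) (k : ℕ) (h : RemAt lam.pval k) :
    ∃ s : SPart, s.pval = Function.update lam.pval k (lam.pval k - 1) := by
  apply exists_pval _ (lam.1.length + k + 1)
  · intro j hj
    rcases eq_or_ne (j+1) k with he | he
    · subst he
      rw [Function.update_self] at hj ⊢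
      rw [Function.update_of_ne (by omega : j ≠ j + 1)]
      have := pval_step lam j (by omega)
      omega
    · rw [Function.update_of_ne he] at hj ⊢
      rcases eq_or_ne j k with rfl | he2
      · rw [Function.update_self]
        have h1 := pval_step lam j hj
        rcases h with h2 | h2 <;> omega
      · rw [Function.update_of_ne he2]
        exact pval_step lam j hj
  · intro j hj
    rw [Function.update_of_ne (by omega)]
    exact pval_eq_zero lam j (by omega)

noncomputable def up (lam : SPart) (k : ℕ) : SPart :=
  if h : AddAt lam.pval k then (exists_up lam k h).choose else lam

noncomputable def down (lam : SPart) (k : ℕ) : SPart :=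
  if h : RemAt lam.pval k then (exists_down lam k h).choose else lam

lemma pval_up {lam : SPart} {k : ℕ} (h : AddAt lam.pval k) :
    (up lam k).pval = Function.update lam.pval k (lam.pval k + 1) := by
  rw [up, dif_pos h]; exact (exists_up lam k h).choose_spec

lemma pval_down {lam : SPart} {k : ℕ} (h : RemAt lam.pval k) :
    (down lam k).pval = Function.update lam.pval k (lam.pval k - 1) := by
  rw [down, dif_pos h]; exact (exists_down lam k h).choose_spec

lemma remAt_up {lam : SPart} {k : ℕ} (h : AddAt lam.pval k) :
    RemAt (up lam k).pval k := by
  rw [pval_up h]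
  unfold RemAt
  rw [Function.update_self, Function.update_of_ne (by omega)]
  rcases Nat.eq_zero_or_pos (lam.pval (k+1)) with h1 | h1
  · omega
  · have := pval_step lam k h1; omega

lemma addAt_down {lam : SPart} {k : ℕ} (h : RemAt lam.pval k) :
    AddAt (down lam k).pval k := by
  rw [pval_down h]
  unfold AddAt
  rcases Nat.eq_zero_or_pos k with rfl | hk
  · left; rfl
  · right
    rw [Function.update_self, Function.update_of_ne (by omega)]
    have h1 : 0 < lam.pval k := remAt_pos h
    have hk1 : k - 1 + 1 = k := by omega
    have h2 := pval_step lam (k-1) (by rw [hk1]; exact h1)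
    rw [hk1] at h2
    omega

lemma down_up {lam : SPart} {k : ℕ} (h : AddAt lam.pval k) : down (up lam k) k = lam := by
  apply pval_inj
  rw [pval_down (remAt_up h), pval_up h, Function.update_self, Function.update_idem]
  simp [Function.update_eq_self]

lemma up_down {lam : SPart} {k : ℕ} (h : RemAt lam.pval k) : up (down lam k) k = lam := by
  apply pval_inj
  rw [pval_up (addAt_down h), pval_down h, Function.update_self, Function.update_idem]
  have : lam.pval k - 1 + 1 = lam.pval k := by have := remAt_pos h; omega
  rw [this]
  simp [Function.update_eq_self]

lemma mem_diagram_iff (lam : SPart) (x : ℕ × ℕ) :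
    x ∈ lam.diagram ↔ 1 ≤ x.1 ∧ x.1 ≤ x.2 ∧ x.2 < x.1 + lam.pval (x.1 - 1) := by
  constructor
  · rintro ⟨k, h1, h2, h3⟩
    have hk : (k : ℕ) < lam.1.length := k.2
    have hx1 : x.1 - 1 = (k : ℕ) := by omega
    rw [hx1, pval_eq_get lam k hk]
    refine ⟨by omega, by omega, by simpa [h1] using h3⟩
  · rintro ⟨h1, h2, h3⟩
    have hpos : 0 < lam.pval (x.1 - 1) := by omega
    have hk : x.1 - 1 < lam.1.length := (pval_pos_iff lam _).1 hpos
    refine ⟨⟨x.1 - 1, hk⟩, ?_, ?_, ?_⟩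
    · show x.1 = x.1 - 1 + 1
      omega
    · show x.1 - 1 + 1 ≤ x.2
      omega
    · show x.2 < x.1 - 1 + 1 + lam.1.get ⟨x.1 - 1, hk⟩
      rw [← pval_eq_get lam _ hk]
      omega

theorem addBox_iff {mu lam : SPart} {b : ℕ × ℕ} :
    AddBox mu lam b ↔ ∃ k, AddAt mu.pval k ∧ b = (k+1, k+1+mu.pval k) ∧ lam = up mu k := by
  constructor
  · rintro ⟨hnb, hd⟩
    have hx : ∀ x : ℕ × ℕ,
        (1 ≤ x.1 ∧ x.1 ≤ x.2 ∧ x.2 < x.1 + lam.pval (x.1-1)) ↔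
          (x = b ∨ (1 ≤ x.1 ∧ x.1 ≤ x.2 ∧ x.2 < x.1 + mu.pval (x.1-1))) := by
      intro x
      rw [← mem_diagram_iff, ← mem_diagram_iff, hd, Set.mem_insert_iff]
    have hbL : b ∈ lam.diagram := by rw [hd]; exact Set.mem_insert _ _
    rw [mem_diagram_iff] at hbL hnb
    obtain ⟨hb1, hb2, hb3⟩ := hbL
    have crows : ∀ r, r ≠ b.1 - 1 → lam.pval r = mu.pval r := by
      intro r hr
      have h1 := hx (r+1, r+1 + lam.pval r)
      have h2 := hx (r+1, r+1 + mu.pval r)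
      simp only [Prod.ext_iff, Nat.add_sub_cancel] at h1 h2
      omega
    have hmain : b.2 = b.1 + mu.pval (b.1-1) ∧ lam.pval (b.1-1) = mu.pval (b.1-1) + 1 := by
      have h1 := hx (b.1, b.1 + mu.pval (b.1-1))
      have h2 := hx (b.1, b.1 + mu.pval (b.1-1) + 1)
      simp only [Prod.ext_iff] at h1 h2
      omega
    have hpv : lam.pval = Function.update mu.pval (b.1-1) (mu.pval (b.1-1) + 1) := by
      funext r
      rcases eq_or_ne r (b.1-1) with rfl | hr
      · rw [Function.update_self]; exact hmain.2
      · rw [Function.update_of_ne hr]; exact crows r hr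
    have haa : AddAt mu.pval (b.1-1) := by
      rcases Nat.eq_zero_or_pos (b.1-1) with h0 | hk
      · exact Or.inl h0
      · right
        have h1 : 0 < lam.pval (b.1-1) := by omega
        have hk1 : b.1 - 1 - 1 + 1 = b.1 - 1 := by omega
        have h2 := pval_step lam (b.1-1-1) (by rw [hk1]; exact h1)
        rw [hk1] at h2
        have h3 := crows (b.1-1-1) (by omega)
        omega
    refine ⟨b.1 - 1, haa, ?_, ?_⟩
    · rw [Prod.ext_iff]
      simp only
      omega
    · apply pval_inj
      rw [hpv, pval_up haa]
  · rintro ⟨k, hk, rfl, rfl⟩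
    constructor
    · rw [mem_diagram_iff]
      simp only [Nat.add_sub_cancel]
      omega
    · ext x
      obtain ⟨x1, x2⟩ := x
      rw [mem_diagram_iff, Set.mem_insert_iff, mem_diagram_iff, pval_up hk]
      simp only [Prod.ext_iff, Function.update_apply]
      rcases eq_or_ne (x1 - 1) k with he | he
      · rw [if_pos he, ← he]
        omega
      · rw [if_neg he]
        omega

lemma covers_iff {mu lam : SPart} :
    Covers mu lam ↔ ∃ k, AddAt mu.pval k ∧ lam = up mu k := by
  unfold Covers
  constructor
  · rintro ⟨b, hb⟩
    obtain ⟨k, h1, _, h3⟩ := addBox_iff.1 hb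
    exact ⟨k, h1, h3⟩
  · rintro ⟨k, h1, h2⟩
    exact ⟨(k+1, k+1+mu.pval k), addBox_iff.2 ⟨k, h1, rfl, h2⟩⟩

lemma covers_iff' {mu lam : SPart} :
    Covers mu lam ↔ ∃ k, RemAt lam.pval k ∧ mu = down lam k := by
  rw [covers_iff]
  constructor
  · rintro ⟨k, h1, rfl⟩
    exact ⟨k, remAt_up h1, (down_up h1).symm⟩
  · rintro ⟨k, h1, rfl⟩
    exact ⟨k, addAt_down h1, (up_down h1).symm⟩

/-- The key local exchange lemma: adding at `k` then removing at `m ≠ k` is the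
same as removing at `m` then adding at `k`. -/
local instance : DecidableEq SPart := Classical.decEq _

lemma crossA (p : ℕ → ℕ) {k m : ℕ} (h : k ≠ m) :
    (AddAt p k ∧ RemAt (Function.update p k (p k + 1)) m) ↔
      (RemAt p m ∧ AddAt (Function.update p m (p m - 1)) k) := by
  by_cases h1 : k = m + 1
  · subst h1
    simp only [AddAt, RemAt, Function.update_apply, Nat.add_sub_cancel, false_or]
    split_ifs <;> (try simp only [false_or]) <;> omega
  · by_cases h2 : m = k + 1
    · subst h2
      simp only [AddAt, RemAt, Function.update_apply, Nat.add_sub_cancel, false_or]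
      split_ifs <;> (try simp only [false_or]) <;> omega
    · simp only [AddAt, RemAt, Function.update_apply, Nat.add_sub_cancel, false_or]
      have hx1 : k - 1 = m → (k = 0 ∧ m = 0) := by omega
      split_ifs <;> (try simp only [false_or]) <;> omega

/-- The weight of a box of content `c`. -/
def W (α : ℂ) (c : ℕ) : ℂ := (if c = 0 then (2:ℂ)⁻¹ else 1) * ((c:ℂ) * ((c:ℂ)+1) + α)

lemma W_zero (α : ℂ) : W α 0 = α / 2 := by
  simp [W]; ring

lemma W_step (α : ℂ) (c : ℕ) (hc : 1 ≤ c) : W α (c+1) = W α c + 2*(c:ℂ) + 2 := by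
  unfold W
  rw [if_neg (by omega), if_neg (by omega)]
  push_cast
  ring

lemma W_one (α : ℂ) : W α 1 = 2 + α := by
  unfold W
  rw [if_neg (by omega)]
  push_cast
  ring

/-- helper : if-then-else pushed into sums/products -/
lemma ite_sum {c : Prop} [Decidable c] (s : Finset ℕ) (g : ℕ → ℂ) :
    (if c then ∑ x ∈ s, g x else 0) = ∑ x ∈ s, if c then g x else 0 := by
  split_ifs <;> simp

lemma ite_ite {c d : Prop} [Decidable c] [Decidable d] (x : ℂ) :
    (if c then (if d then x else 0) else 0) = if c ∧ d then x else 0 := by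
  by_cases hc : c <;> by_cases hd : d <;> simp [hc, hd]

/-- The set of pairs `(κ, b)` with `AddBox μ κ b`, as a finite set. -/
lemma upSet_eq (mu : SPart) (M : ℕ) (hM : mu.1.length < M) :
    {p : SPart × (ℕ × ℕ) | AddBox mu p.1 p.2} =
      ↑(((Finset.range M).filter (fun k => AddAt mu.pval k)).image
        (fun k => (up mu k, (k+1, k+1+mu.pval k)))) := by
  ext ⟨kap, b⟩
  simp only [Set.mem_setOf_eq, Finset.coe_image, Set.mem_image, Finset.mem_coe,
    Finset.mem_filter, Finset.mem_range, addBox_iff, Prod.ext_iff]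
  constructor
  · rintro ⟨k, h1, h2, h3⟩
    exact ⟨k, ⟨by have := addAt_le h1; omega, h1⟩, h3.symm, h2.1.symm, h2.2.symm⟩
  · rintro ⟨k, ⟨hk, h1⟩, h2, h3⟩
    exact ⟨k, h1, ⟨h3.1.symm, h3.2.symm⟩, h2.symm⟩

/-- The set of pairs `(μ, b)` with `AddBox μ κ b`, as a finite set. -/
lemma downSet_eq (kap : SPart) (M : ℕ) (hM : kap.1.length < M) :
    {p : SPart × (ℕ × ℕ) | AddBox p.1 kap p.2} =
      ↑(((Finset.range M).filter (fun k => RemAt kap.pval k)).image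
        (fun k => (down kap k, (k+1, k + kap.pval k)))) := by
  ext ⟨mu, b⟩
  simp only [Set.mem_setOf_eq, Finset.coe_image, Set.mem_image, Finset.mem_coe,
    Finset.mem_filter, Finset.mem_range, addBox_iff, Prod.ext_iff]
  constructor
  · rintro ⟨k, h1, h2, h3⟩
    have hrem : RemAt kap.pval k := by rw [h3]; exact remAt_up h1
    have hdown : down kap k = mu := by rw [h3]; exact down_up h1
    have hpv : kap.pval k = mu.pval k + 1 := by
      rw [h3, pval_up h1, Function.update_self]
    refine ⟨k, ⟨by have := remAt_lt hrem; omega, hrem⟩, hdown, by omega, by omega⟩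
  · rintro ⟨k, ⟨hk, h1⟩, hmu, hb1, hb2⟩
    subst hmu
    have hpv : (down kap k).pval k = kap.pval k - 1 := by
      rw [pval_down h1, Function.update_self]
    have hpos := remAt_pos h1
    exact ⟨k, addAt_down h1, ⟨by omega, by omega⟩, (up_down h1).symm⟩

lemma pval_empty (k : ℕ) : (empty : SPart).pval k = 0 := by
  simp [pval, empty]

lemma list_sum_getD (l : List ℕ) : l.sum = ∑ k ∈ Finset.range l.length, l.getD k 0 := by
  induction l with
  | nil => simp
  | cons a t ih =>
    rw [List.sum_cons, List.length_cons,
      Finset.sum_range_succ' (fun k => (a :: t).getD k 0) t.length]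
    simp [ih]
    omega

lemma weight_eq_sum (lam : SPart) (M : ℕ) (hM : lam.1.length ≤ M) :
    lam.weight = ∑ k ∈ Finset.range M, lam.pval k := by
  rw [weight, list_sum_getD]
  apply Finset.sum_subset (Finset.range_subset_range.2 hM)
  intro x _ hx
  exact pval_eq_zero lam x (by simpa using hx)

lemma len_up {lam : SPart} {k : ℕ} (h : AddAt lam.pval k) :
    (up lam k).1.length ≤ lam.1.length + k + 1 := by
  by_contra hc
  push_neg at hc
  have h1 := (pval_pos_iff (up lam k) (lam.1.length + k + 1)).2 (by omega)
  rw [pval_up h, Function.update_of_ne (by omega)] at h1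
  have h2 := pval_eq_zero lam (lam.1.length + k + 1) (by omega)
  omega

lemma len_down {lam : SPart} {k : ℕ} (h : RemAt lam.pval k) :
    (down lam k).1.length ≤ lam.1.length := by
  have hk := remAt_lt h
  by_contra hc
  push_neg at hc
  have h1 := (pval_pos_iff (down lam k) lam.1.length).2 (by omega)
  rw [pval_down h, Function.update_of_ne (by omega)] at h1
  have h2 := pval_eq_zero lam lam.1.length le_rfl
  omega

lemma weight_up {lam : SPart} {k : ℕ} (h : AddAt lam.pval k) :
    (up lam k).weight = lam.weight + 1 := by
  have hlen := len_up h
  have hk := addAt_le h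
  set M := lam.1.length + k + 2 with hMdef
  have hkM : k ∈ Finset.range M := by simp [hMdef]; omega
  rw [weight_eq_sum (up lam k) M (by omega), weight_eq_sum lam M (by omega), pval_up h,
    Finset.sum_update_of_mem hkM, ← Finset.add_sum_erase _ _ hkM, Finset.erase_eq]
  omega

lemma weight_down {lam : SPart} {k : ℕ} (h : RemAt lam.pval k) :
    lam.weight = (down lam k).weight + 1 := by
  have hlen := len_down h
  have hk := remAt_lt h
  have hpos := remAt_pos h
  set M := lam.1.length + 1 with hMdef
  have hkM : k ∈ Finset.range M := by simp [hMdef]; omega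
  rw [weight_eq_sum (down lam k) M (by omega), weight_eq_sum lam M (by omega), pval_down h,
    Finset.sum_update_of_mem hkM, ← Finset.add_sum_erase _ _ hkM, Finset.erase_eq]
  omega

lemma weight_zero_iff (lam : SPart) : lam.weight = 0 ↔ lam = empty := by
  constructor
  · intro h
    apply Subtype.ext
    cases hl : lam.1 with
    | nil => rfl
    | cons a t =>
      have ha := lam.2.2 a (by rw [hl]; exact List.mem_cons_self)
      have hs : lam.weight = a + t.sum := by rw [weight, hl]; simp
      omega
  · rintro rfl; rfl

lemma up_ne_empty {lam : SPart} {k : ℕ} (h : AddAt lam.pval k) : up lam k ≠ empty := by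
  intro hc
  have h1 := weight_up h
  rw [hc] at h1
  have h2 : (empty : SPart).weight = 0 := rfl
  omega

lemma addAt_succ (p : ℕ → ℕ) (k : ℕ) : AddAt p (k+1) ↔ p k ≥ p (k+1) + 2 := by
  unfold AddAt
  constructor
  · rintro (h | h)
    · omega
    · exact h
  · intro h
    right
    exact h

lemma key_sum (α : ℂ) (p : ℕ → ℕ) (L : ℕ) (hdec : ∀ k, 0 < p (k+1) → p (k+1) < p k)
    (hz : ∀ k, L ≤ k → p k = 0) :
    ∑ k ∈ Finset.range (L+1), (if AddAt p k then W α (p k) else 0)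
      = (∑ k ∈ Finset.range (L+1), if RemAt p k then W α (p k - 1) else 0)
        + (2 * (∑ k ∈ Finset.range L, (p k : ℂ)) + α/2) := by
  induction L generalizing p with
  | zero =>
    have h0 : p 0 = 0 := hz 0 le_rfl
    have h1 : AddAt p 0 := Or.inl rfl
    have h2 : ¬ RemAt p 0 := by unfold RemAt; omega
    rw [Finset.sum_range_one, Finset.sum_range_one, Finset.sum_range_zero,
      if_pos h1, if_neg h2, h0, W_zero]
    ring
  | succ L ih =>
    have ihq := ih (fun j => p (j+1)) (fun k hk => hdec (k+1) hk)
      (fun k hk => hz (k+1) (by omega))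
    beta_reduce at ihq
    have eA : ∑ k ∈ Finset.range (L+1+1), (if AddAt p k then W α (p k) else 0)
        = (∑ k ∈ Finset.range (L+1), (if AddAt (fun j => p (j+1)) k then W α (p (k+1)) else 0))
          + (if AddAt p 0 then W α (p 0) else 0)
          + (if AddAt p 1 then W α (p 1) else 0)
          - (if AddAt (fun j => p (j+1)) 0 then W α (p 1) else 0) := by
      rw [Finset.sum_range_succ' (fun k => if AddAt p k then W α (p k) else 0) (L+1),
        Finset.sum_range_succ' (fun k => if AddAt p (k+1) then W α (p (k+1)) else 0) L,
        Finset.sum_range_succ'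
          (fun k => if AddAt (fun j => p (j+1)) k then W α (p (k+1)) else 0) L]
      have hsh : ∀ k, (if AddAt p (k+1+1) then W α (p (k+1+1)) else 0)
          = (if AddAt (fun j => p (j+1)) (k+1) then W α (p (k+1+1)) else 0) := by
        intro k
        exact if_congr ((addAt_succ p (k+1)).trans (addAt_succ (fun j => p (j+1)) k).symm)
          rfl rfl
      rw [Finset.sum_congr rfl (fun k _ => hsh k)]
      ring
    have eR : ∑ k ∈ Finset.range (L+1+1), (if RemAt p k then W α (p k - 1) else 0)
        = (∑ k ∈ Finset.range (L+1), (if RemAt (fun j => p (j+1)) k then W α (p (k+1) - 1) else 0))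
          + (if RemAt p 0 then W α (p 0 - 1) else 0) := by
      rw [Finset.sum_range_succ' (fun k => if RemAt p k then W α (p k - 1) else 0) (L+1)]
      exact congrArg₂ (· + ·)
        (Finset.sum_congr rfl (fun k _ => if_congr Iff.rfl rfl rfl)) rfl
    have eP : ∑ k ∈ Finset.range (L+1), (p k : ℂ)
        = (∑ k ∈ Finset.range L, (p (k+1) : ℂ)) + (p 0 : ℂ) := by
      rw [Finset.sum_range_succ' (fun k => (p k : ℂ)) L]
    beta_reduce at eA eR
    have hkey : (if AddAt p 0 then W α (p 0) else 0) + (if AddAt p 1 then W α (p 1) else 0)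
        - (if AddAt (fun j => p (j+1)) 0 then W α (p 1) else 0)
        = (if RemAt p 0 then W α (p 0 - 1) else 0) + 2 * (p 0 : ℂ) := by
      have ha0 : AddAt p 0 := Or.inl rfl
      have hq0 : AddAt (fun j => p (j+1)) 0 := Or.inl rfl
      rw [if_pos ha0, if_pos hq0, if_congr (addAt_succ p 0) rfl rfl]
      by_cases h01 : p 0 ≥ p 1 + 2
      · have hr0 : RemAt p 0 := Or.inl h01
        rw [if_pos h01, if_pos hr0]
        obtain ⟨c, hc⟩ : ∃ c, p 0 = c + 2 := ⟨p 0 - 2, by omega⟩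
        rw [hc]
        have h1 : W α (c + 2 - 1) = W α (c + 1) := rfl
        rw [h1, W_step α (c+1) (by omega)]
        push_cast
        ring
      · rw [if_neg h01]
        rcases Nat.eq_zero_or_pos (p 1) with h1 | h1
        · rcases Nat.eq_zero_or_pos (p 0) with h0 | h0
          · rw [if_neg (show ¬ RemAt p 0 by unfold RemAt; have e01 : p (0+1) = p 1 := rfl; omega), h0, h1]
            simp
          · have h0' : p 0 = 1 := by omega
            rw [if_pos (show RemAt p 0 by unfold RemAt; have e01 : p (0+1) = p 1 := rfl; omega), h0', h1]
            have e1 : W α (1 - 1) = W α 0 := rfl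
            rw [e1, W_one, W_zero]
            push_cast
            ring
        · have hlt : p 1 < p 0 := hdec 0 h1
          have he : p 0 = p 1 + 1 := by
            omega
          rw [if_neg (show ¬ RemAt p 0 by unfold RemAt; have e01 : p (0+1) = p 1 := rfl; omega), he, W_step α (p 1) h1]
          push_cast
          ring
    rw [eA, eR, eP, ihq]
    linear_combination hkey

lemma len_up' {lam : SPart} {k : ℕ} (h : AddAt lam.pval k) :
    (up lam k).1.length ≤ lam.1.length + 1 := by
  have hk := addAt_le h
  by_contra hc
  push_neg at hc
  have h1 := (pval_pos_iff (up lam k) (lam.1.length + 1)).2 (by omega)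
  rw [pval_up h, Function.update_of_ne (by omega)] at h1
  have h2 := pval_eq_zero lam (lam.1.length + 1) (by omega)
  omega

end
end SPart

namespace SPart
noncomputable section
open Function Finset

lemma Dhat_eval (f : SPart → ℂ) (mu : SPart) (M : ℕ) (hM : mu.1.length < M) :
    DhatOp f mu = ∑ k ∈ Finset.range M, if AddAt mu.pval k then f (up mu k) else 0 := by
  have h1 : DhatOp f mu = ∑ᶠ p ∈ {p : SPart × (ℕ × ℕ) | SPart.AddBox mu p.1 p.2}, f p.1 := rfl
  rw [h1, upSet_eq mu M hM, finsum_mem_coe_finset]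
  rw [Finset.sum_image (by
    intro x hx y hy hxy
    have := congrArg (fun q => q.2.1) hxy
    simp only at this
    omega)]
  rw [Finset.sum_filter]

lemma Wcoeff (α : ℂ) (i j : ℕ) (hij : i ≤ j) :
    (if j = i then (2:ℂ)⁻¹ else 1) * (((j:ℂ) - (i:ℂ)) * (((j:ℂ) - (i:ℂ)) + 1) + α)
      = W α (j - i) := by
  obtain ⟨c, rfl⟩ : ∃ c, j = i + c := ⟨j - i, by omega⟩
  rw [if_congr (show (i + c = i) ↔ (c = 0) by omega) rfl rfl,
    show i + c - i = c from by omega]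
  unfold W
  split_ifs with h
  · subst h
    push_cast
    ring
  · push_cast
    ring

lemma Uhat_eval (α : ℂ) (f : SPart → ℂ) (kap : SPart) (M : ℕ) (hM : kap.1.length < M) :
    UhatOp α f kap = ∑ k ∈ Finset.range M,
      if RemAt kap.pval k then W α (kap.pval k - 1) * f (down kap k) else 0 := by
  have h1 : UhatOp α f kap = ∑ᶠ p ∈ {p : SPart × (ℕ × ℕ) | SPart.AddBox p.1 kap p.2},
      ((if p.2.2 = p.2.1 then (2 : ℂ)⁻¹ else 1) *
        (((p.2.2 : ℂ) - (p.2.1 : ℂ)) * (((p.2.2 : ℂ) - (p.2.1 : ℂ)) + 1) + α)) * f p.1 := rfl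
  rw [h1, downSet_eq kap M hM, finsum_mem_coe_finset]
  rw [Finset.sum_image (by
    intro x hx y hy hxy
    have := congrArg (fun q => q.2.1) hxy
    simp only at this
    omega)]
  rw [Finset.sum_filter]
  apply Finset.sum_congr rfl
  intro k _
  by_cases h : RemAt kap.pval k
  · rw [if_pos h, if_pos h]
    have hpos := remAt_pos h
    show ((if (k + kap.pval k) = (k + 1) then (2:ℂ)⁻¹ else 1) *
        ((((k + kap.pval k : ℕ) : ℂ) - ((k + 1 : ℕ) : ℂ)) *
          ((((k + kap.pval k : ℕ) : ℂ) - ((k + 1 : ℕ) : ℂ)) + 1) + α)) * f (down kap k)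
      = W α (kap.pval k - 1) * f (down kap k)
    rw [Wcoeff α (k+1) (k + kap.pval k) (by omega),
      show k + kap.pval k - (k+1) = kap.pval k - 1 from by omega]
  · rw [if_neg h, if_neg h]

/-- summand of `D̂ ∘ Û`. -/
def TL (α : ℂ) (f : SPart → ℂ) (mu : SPart) (q : ℕ × ℕ) : ℂ :=
  if AddAt mu.pval q.1 ∧ RemAt (up mu q.1).pval q.2
  then W α ((up mu q.1).pval q.2 - 1) * f (down (up mu q.1) q.2) else 0

/-- summand of `Û ∘ D̂`. -/
def TR (α : ℂ) (f : SPart → ℂ) (mu : SPart) (q : ℕ × ℕ) : ℂ :=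
  if RemAt mu.pval q.1 ∧ AddAt (down mu q.1).pval q.2
  then W α (mu.pval q.1 - 1) * f (up (down mu q.1) q.2) else 0

lemma TL_eq_TR (α : ℂ) (f : SPart → ℂ) (mu : SPart) {k m : ℕ} (hkm : k ≠ m) :
    TL α f mu (k, m) = TR α f mu (m, k) := by
  unfold TL TR
  simp only
  by_cases h : AddAt mu.pval k ∧ RemAt (up mu k).pval m
  · have h2 : RemAt mu.pval m ∧ AddAt (down mu m).pval k := by
      have hcc := (crossA mu.pval hkm).mp ⟨h.1, by rw [← pval_up h.1]; exact h.2⟩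
      exact ⟨hcc.1, by rw [pval_down hcc.1]; exact hcc.2⟩
    rw [if_pos h, if_pos h2]
    have hv1 : (up mu k).pval m = mu.pval m := by
      rw [pval_up h.1, Function.update_of_ne (Ne.symm hkm)]
    have hUm : Function.update mu.pval k (mu.pval k + 1) m = mu.pval m :=
      Function.update_of_ne (Ne.symm hkm) _ _
    have hDk : Function.update mu.pval m (mu.pval m - 1) k = mu.pval k :=
      Function.update_of_ne hkm _ _
    have hv2 : down (up mu k) m = up (down mu m) k := by
      apply pval_inj
      calc (down (up mu k) m).pval
          = Function.update ((up mu k).pval) m ((up mu k).pval m - 1) := pval_down h.2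
        _ = Function.update (Function.update mu.pval k (mu.pval k + 1)) m (mu.pval m - 1) := by
            rw [pval_up h.1, hUm]
        _ = Function.update (Function.update mu.pval m (mu.pval m - 1)) k (mu.pval k + 1) :=
            Function.update_comm hkm _ _ _
        _ = Function.update ((down mu m).pval) k ((down mu m).pval k + 1) := by
            rw [pval_down h2.1, hDk]
        _ = (up (down mu m) k).pval := (pval_up h2.2).symm
    rw [hv1, hv2]
  · have h2 : ¬ (RemAt mu.pval m ∧ AddAt (down mu m).pval k) := by
      intro hc
      apply h
      have hcc := (crossA mu.pval hkm).mpr ⟨hc.1, by rw [← pval_down hc.1]; exact hc.2⟩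
      exact ⟨hcc.1, by rw [pval_up hcc.1]; exact hcc.2⟩
    rw [if_neg h, if_neg h2]

lemma comm_eval (α : ℂ) (f : SPart → ℂ) (mu : SPart) :
    DhatOp (UhatOp α f) mu
      = UhatOp α (DhatOp f) mu + (2 * (mu.weight : ℂ) + α / 2) * f mu := by
  have hbu : ∀ k, AddAt mu.pval k → (up mu k).1.length < mu.1.length + 1 + 1 := by
    intro k h
    have := len_up' h
    omega
  have hbd : ∀ k, RemAt mu.pval k → (down mu k).1.length < mu.1.length + 1 + 1 := by
    intro k h
    have := len_down h
    omega
  set M := mu.1.length + 1 + 1 with hMdef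
  rw [Dhat_eval (UhatOp α f) mu M (by omega), Uhat_eval α (DhatOp f) mu M (by omega)]
  have eL : ∀ k ∈ Finset.range M, (if AddAt mu.pval k then UhatOp α f (up mu k) else 0)
      = ∑ m ∈ Finset.range M, TL α f mu (k, m) := by
    intro k _
    unfold TL
    by_cases h : AddAt mu.pval k
    · rw [if_pos h, Uhat_eval α f (up mu k) M (hbu k h)]
      apply Finset.sum_congr rfl
      intro m _
      simp only [h, true_and]
    · rw [if_neg h]
      symm
      apply Finset.sum_eq_zero
      intro m _
      rw [if_neg (by tauto)]
  have eR : ∀ k ∈ Finset.range M,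
      (if RemAt mu.pval k then W α (mu.pval k - 1) * DhatOp f (down mu k) else 0)
      = ∑ m ∈ Finset.range M, TR α f mu (k, m) := by
    intro k _
    unfold TR
    by_cases h : RemAt mu.pval k
    · rw [if_pos h, Dhat_eval f (down mu k) M (hbd k h), Finset.mul_sum]
      apply Finset.sum_congr rfl
      intro m _
      simp only [h, true_and, mul_ite, mul_zero]
    · rw [if_neg h]
      symm
      apply Finset.sum_eq_zero
      intro m _
      rw [if_neg (by tauto)]
  rw [Finset.sum_congr rfl eL, Finset.sum_congr rfl eR]
  rw [show (∑ k ∈ Finset.range M, ∑ m ∈ Finset.range M, TL α f mu (k, m))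
      = ∑ q ∈ (Finset.range M) ×ˢ (Finset.range M), TL α f mu q from by
    rw [Finset.sum_product]]
  rw [show (∑ k ∈ Finset.range M, ∑ m ∈ Finset.range M, TR α f mu (k, m))
      = ∑ q ∈ (Finset.range M) ×ˢ (Finset.range M), TR α f mu q from by
    rw [Finset.sum_product]]
  have splitL := (Finset.sum_filter_add_sum_filter_not
    ((Finset.range M) ×ˢ (Finset.range M)) (fun q => q.1 = q.2) (TL α f mu)).symm
  have splitR := (Finset.sum_filter_add_sum_filter_not
    ((Finset.range M) ×ˢ (Finset.range M)) (fun q => q.1 = q.2) (TR α f mu)).symm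
  have hoff : ∑ q ∈ ((Finset.range M) ×ˢ (Finset.range M)).filter (fun q => ¬ q.1 = q.2),
        TL α f mu q
      = ∑ q ∈ ((Finset.range M) ×ˢ (Finset.range M)).filter (fun q => ¬ q.1 = q.2),
        TR α f mu q := by
    apply Finset.sum_nbij' (i := Prod.swap) (j := Prod.swap)
    · intro a ha
      simp only [Finset.mem_filter, Finset.mem_product] at ha ⊢
      exact ⟨⟨ha.1.2, ha.1.1⟩, by simpa using fun hc => ha.2 hc.symm⟩
    · intro a ha
      simp only [Finset.mem_filter, Finset.mem_product] at ha ⊢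
      exact ⟨⟨ha.1.2, ha.1.1⟩, by simpa using fun hc => ha.2 hc.symm⟩
    · intro a _; simp
    · intro a _; simp
    · intro a ha
      simp only [Finset.mem_filter] at ha
      obtain ⟨a1, a2⟩ := a
      exact TL_eq_TR α f mu (by simpa using ha.2)
  have hdiagset : ((Finset.range M) ×ˢ (Finset.range M)).filter (fun q => q.1 = q.2)
      = (Finset.range M).image (fun k => (k, k)) := by
    ext q
    simp only [Finset.mem_filter, Finset.mem_product, Finset.mem_image, Finset.mem_range,
      Prod.ext_iff]
    constructor
    · rintro ⟨⟨h1, h2⟩, h3⟩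
      exact ⟨q.1, h1, rfl, h3⟩
    · rintro ⟨k, hk, h1, h2⟩
      exact ⟨⟨by omega, by omega⟩, by omega⟩
  have hdiagL : ∑ q ∈ ((Finset.range M) ×ˢ (Finset.range M)).filter (fun q => q.1 = q.2),
        TL α f mu q
      = (∑ k ∈ Finset.range M, if AddAt mu.pval k then W α (mu.pval k) else 0) * f mu := by
    rw [hdiagset, Finset.sum_image (by intro x _ y _ h; simpa [Prod.ext_iff] using h),
      Finset.sum_mul]
    apply Finset.sum_congr rfl
    intro k _
    unfold TL
    by_cases h : AddAt mu.pval k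
    · have hrem := remAt_up h
      rw [if_pos ⟨h, hrem⟩, if_pos h]
      have hv : (up mu k).pval k = mu.pval k + 1 := by
        rw [pval_up h, Function.update_self]
      rw [hv, down_up h]
      simp
    · rw [if_neg (by tauto), if_neg h, zero_mul]
  have hdiagR : ∑ q ∈ ((Finset.range M) ×ˢ (Finset.range M)).filter (fun q => q.1 = q.2),
        TR α f mu q
      = (∑ k ∈ Finset.range M, if RemAt mu.pval k then W α (mu.pval k - 1) else 0) * f mu := by
    rw [hdiagset, Finset.sum_image (by intro x _ y _ h; simpa [Prod.ext_iff] using h),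
      Finset.sum_mul]
    apply Finset.sum_congr rfl
    intro k _
    unfold TR
    by_cases h : RemAt mu.pval k
    · have hadd := addAt_down h
      rw [if_pos ⟨h, hadd⟩, if_pos h, up_down h]
    · rw [if_neg (by tauto), if_neg h, zero_mul]
  have hksum : (∑ k ∈ Finset.range M, if AddAt mu.pval k then W α (mu.pval k) else 0)
      = (∑ k ∈ Finset.range M, if RemAt mu.pval k then W α (mu.pval k - 1) else 0)
        + (2 * ((mu.weight : ℂ)) + α/2) := by
    have hk := key_sum α mu.pval (mu.1.length + 1)
      (fun k hk => pval_step mu k hk)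
      (fun k hk => pval_eq_zero mu k (by omega))
    rw [hMdef]
    rw [hk]
    congr 2
    rw [weight_eq_sum mu (mu.1.length + 1) (by omega)]
    push_cast
    rfl
  linear_combination splitL - splitR + hoff + hdiagL - hdiagR + f mu * hksum

lemma Uhat_zero (α : ℂ) (lam : SPart) : UhatOp α (fun _ => (0:ℂ)) lam = 0 := by
  rw [Uhat_eval α _ lam (lam.1.length+1) (by omega)]
  apply Finset.sum_eq_zero
  intro k _
  split_ifs <;> simp

lemma Uhat_smul (α c : ℂ) (f : SPart → ℂ) (lam : SPart) :
    UhatOp α (fun x => c * f x) lam = c * UhatOp α f lam := by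
  rw [Uhat_eval α _ lam (lam.1.length+1) (by omega),
    Uhat_eval α f lam (lam.1.length+1) (by omega), Finset.mul_sum]
  apply Finset.sum_congr rfl
  intro k _
  split_ifs <;> ring

lemma U_supp (α : ℂ) : ∀ n (lam : SPart),
    (UhatOp α)^[n] (deltaAt SPart.empty) lam ≠ 0 → lam.weight = n := by
  intro n
  induction n with
  | zero =>
    intro lam h
    rw [Function.iterate_zero_apply] at h
    unfold deltaAt at h
    by_cases he : lam = SPart.empty
    · rw [he]; rfl
    · rw [if_neg he] at h
      exact absurd rfl h
  | succ n ih =>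
    intro lam h
    rw [Function.iterate_succ_apply'] at h
    rw [Uhat_eval α _ lam (lam.1.length+1) (by omega)] at h
    obtain ⟨k, hk, hne⟩ := Finset.exists_ne_zero_of_sum_ne_zero h
    by_cases hr : RemAt lam.pval k
    · rw [if_pos hr] at hne
      have h2 : (UhatOp α)^[n] (deltaAt SPart.empty) (down lam k) ≠ 0 :=
        fun hc => hne (by rw [hc, mul_zero])
      have h3 := ih (down lam k) h2
      have h4 := weight_down hr
      omega
    · rw [if_neg hr] at hne
      exact absurd rfl hne

lemma DU (α : ℂ) : ∀ n (lam : SPart),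
    DhatOp ((UhatOp α)^[n+1] (deltaAt SPart.empty)) lam
      = (((n:ℂ)+1) * ((n:ℂ) + α/2)) * (UhatOp α)^[n] (deltaAt SPart.empty) lam := by
  intro n
  induction n with
  | zero =>
    intro lam
    have hd0 : DhatOp (deltaAt SPart.empty) = fun _ => (0:ℂ) := by
      funext x
      rw [Dhat_eval _ x (x.1.length+1) (by omega)]
      apply Finset.sum_eq_zero
      intro k _
      split_ifs with h
      · unfold deltaAt
        rw [if_neg (up_ne_empty h)]
      · rfl
    rw [Function.iterate_one, comm_eval α (deltaAt SPart.empty) lam, hd0, Uhat_zero α lam,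
      Function.iterate_zero_apply]
    by_cases he : lam = SPart.empty
    · subst he
      have hwz : (SPart.empty).weight = 0 := rfl
      rw [hwz]
      unfold deltaAt
      rw [if_pos rfl]
      push_cast
      ring
    · unfold deltaAt
      rw [if_neg he]
      ring
  | succ n ih =>
    intro lam
    have hstep : (UhatOp α)^[n+1+1] (deltaAt SPart.empty)
        = UhatOp α ((UhatOp α)^[n+1] (deltaAt SPart.empty)) := by
      funext x
      exact congrFun (Function.iterate_succ_apply' (UhatOp α) (n+1) (deltaAt SPart.empty)) x
    rw [hstep, comm_eval α _ lam]
    have hd : DhatOp ((UhatOp α)^[n+1] (deltaAt SPart.empty))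
        = fun x => (((n:ℂ)+1) * ((n:ℂ)+α/2)) * (UhatOp α)^[n] (deltaAt SPart.empty) x :=
      funext ih
    rw [hd, Uhat_smul α _ _ lam]
    have hU : UhatOp α ((UhatOp α)^[n] (deltaAt SPart.empty)) lam
        = (UhatOp α)^[n+1] (deltaAt SPart.empty) lam := (congrFun (Function.iterate_succ_apply' (UhatOp α) n (deltaAt SPart.empty)) lam).symm
    rw [hU]
    by_cases hz : (UhatOp α)^[n+1] (deltaAt SPart.empty) lam = 0
    · rw [hz]
      push_cast
      ring
    · have hw := U_supp α (n+1) lam hz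
      rw [hw]
      push_cast
      ring

lemma sum_extend (M M' : ℕ) (h : M ≤ M') (F : ℕ → ℂ) (hF : ∀ k, M ≤ k → F k = 0) :
    ∑ k ∈ Finset.range M', F k = ∑ k ∈ Finset.range M, F k :=
  (Finset.sum_subset (Finset.range_subset_range.2 h) (fun x _ hx => hF x (by simpa using hx))).symm

lemma edge_cond {mu lam : SPart} {k : ℕ} :
    (AddAt mu.pval k ∧ up mu k = lam) ↔ (RemAt lam.pval k ∧ down lam k = mu) := by
  constructor
  · rintro ⟨h, rfl⟩
    exact ⟨remAt_up h, down_up h⟩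
  · rintro ⟨h, rfl⟩
    exact ⟨addAt_down h, up_down h⟩

lemma edge_sum (mu lam : SPart) (M M' : ℕ) (hM : mu.1.length < M) (hM' : lam.1.length < M') :
    (∑ k ∈ Finset.range M, if AddAt mu.pval k ∧ up mu k = lam then (1:ℂ) else 0)
      = ∑ k ∈ Finset.range M', if RemAt lam.pval k ∧ down lam k = mu then (1:ℂ) else 0 := by
  have hL : ∀ k, M ≤ k → (if AddAt mu.pval k ∧ up mu k = lam then (1:ℂ) else 0) = 0 := by
    intro k hk
    rw [if_neg]
    rintro ⟨h, _⟩
    have := addAt_le h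
    omega
  have hR : ∀ k, M' ≤ k → (if RemAt lam.pval k ∧ down lam k = mu then (1:ℂ) else 0) = 0 := by
    intro k hk
    rw [if_neg]
    rintro ⟨h, _⟩
    have := remAt_lt h
    omega
  rw [← sum_extend M (max M M') (le_max_left _ _) _ hL,
      ← sum_extend M' (max M M') (le_max_right _ _) _ hR]
  apply Finset.sum_congr rfl
  intro k _
  exact if_congr edge_cond rfl rfl

lemma D_rec (n : ℕ) : ∀ (lam mu : SPart),
    DhatOp^[n+1] (deltaAt lam) mu
      = ∑ k ∈ Finset.range (lam.1.length + 1),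
          if RemAt lam.pval k then DhatOp^[n] (deltaAt (down lam k)) mu else 0 := by
  induction n with
  | zero =>
    intro lam mu
    rw [Function.iterate_one, Dhat_eval _ mu (mu.1.length+1) (by omega)]
    have e1 : ∀ k, (if AddAt mu.pval k then deltaAt lam (up mu k) else 0)
        = (if AddAt mu.pval k ∧ up mu k = lam then (1:ℂ) else 0) := by
      intro k
      unfold deltaAt
      by_cases h : AddAt mu.pval k
      · by_cases h2 : up mu k = lam
        · rw [if_pos h, if_pos h2, if_pos ⟨h, h2⟩]
        · rw [if_pos h, if_neg h2, if_neg (by tauto)]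
      · rw [if_neg h, if_neg (by tauto)]
    rw [Finset.sum_congr rfl (fun k _ => e1 k),
      edge_sum mu lam (mu.1.length+1) (lam.1.length+1) (by omega) (by omega)]
    apply Finset.sum_congr rfl
    intro k _
    by_cases h : RemAt lam.pval k
    · by_cases h2 : down lam k = mu
      · rw [if_pos ⟨h, h2⟩, if_pos h, Function.iterate_zero_apply]
        unfold deltaAt
        rw [if_pos h2.symm]
      · rw [if_neg (by tauto), if_pos h, Function.iterate_zero_apply]
        unfold deltaAt
        rw [if_neg (fun hc => h2 hc.symm)]
    · rw [if_neg (by tauto), if_neg h]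
  | succ n ih =>
    intro lam mu
    have hstep : DhatOp^[n+1+1] (deltaAt lam) mu = DhatOp (DhatOp^[n+1] (deltaAt lam)) mu :=
      Function.iterate_succ_apply' DhatOp (n+1) (deltaAt lam) ▸ rfl
    rw [hstep, Dhat_eval _ mu (mu.1.length+1) (by omega)]
    have e1 : ∀ j ∈ Finset.range (mu.1.length+1),
        (if AddAt mu.pval j then DhatOp^[n+1] (deltaAt lam) (up mu j) else 0)
        = ∑ k ∈ Finset.range (lam.1.length+1),
            (if AddAt mu.pval j then
              (if RemAt lam.pval k then DhatOp^[n] (deltaAt (down lam k)) (up mu j) else 0)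
            else 0) := by
      intro j _
      by_cases h : AddAt mu.pval j
      · rw [if_pos h, ih lam (up mu j)]
        apply Finset.sum_congr rfl
        intro k _
        rw [if_pos h]
      · rw [if_neg h]
        symm
        apply Finset.sum_eq_zero
        intro k _
        rw [if_neg h]
    rw [Finset.sum_congr rfl e1, Finset.sum_comm]
    apply Finset.sum_congr rfl
    intro k _
    by_cases h : RemAt lam.pval k
    · simp only [if_pos h]
      have hstep2 : DhatOp^[n+1] (deltaAt (down lam k)) mu
          = DhatOp (DhatOp^[n] (deltaAt (down lam k))) mu := by
        rw [Function.iterate_succ_apply' DhatOp n (deltaAt (down lam k))]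
      rw [hstep2, Dhat_eval _ mu (mu.1.length+1) (by omega)]
    · simp only [if_neg h]
      simp

lemma hrec_finset (d : SPart → ℕ)
    (hrec : ∀ lam : SPart, lam ≠ SPart.empty →
      d lam = ∑ᶠ mu ∈ {mu : SPart | SPart.Covers mu lam}, d mu)
    {lam : SPart} (hne : lam ≠ SPart.empty) :
    d lam = ∑ k ∈ (Finset.range (lam.1.length+1)).filter (fun k => RemAt lam.pval k),
      d (down lam k) := by
  have hcov : {mu : SPart | SPart.Covers mu lam}
      = ↑(((Finset.range (lam.1.length+1)).filter (fun k => RemAt lam.pval k)).image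
          (fun k => down lam k)) := by
    ext mu
    simp only [Set.mem_setOf_eq, Finset.coe_image, Set.mem_image, Finset.mem_coe,
      Finset.mem_filter, Finset.mem_range, covers_iff']
    constructor
    · rintro ⟨k, h1, rfl⟩
      exact ⟨k, ⟨by have := remAt_lt h1; omega, h1⟩, rfl⟩
    · rintro ⟨k, ⟨hk, h1⟩, rfl⟩
      exact ⟨k, h1, rfl⟩
  have hd := hrec lam hne
  rw [hcov, finsum_mem_coe_finset] at hd
  rw [Finset.sum_image (by
    intro x hx y hy hxy
    simp only [Finset.mem_coe, Finset.mem_filter] at hx hy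
    by_contra hne2
    have hx2 := congrFun (congrArg pval hxy) x
    rw [pval_down hx.2, pval_down hy.2, Function.update_self,
      Function.update_of_ne hne2] at hx2
    have := remAt_pos hx.2
    omega)] at hd
  exact hd

lemma Dcount (d : SPart → ℕ) (h0 : d SPart.empty = 1)
    (hrec : ∀ lam : SPart, lam ≠ SPart.empty →
      d lam = ∑ᶠ mu ∈ {mu : SPart | SPart.Covers mu lam}, d mu) :
    ∀ n (lam : SPart), DhatOp^[n] (deltaAt lam) SPart.empty
      = if lam.weight = n then (d lam : ℂ) else 0 := by
  intro n
  induction n with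
  | zero =>
    intro lam
    rw [Function.iterate_zero_apply]
    unfold deltaAt
    by_cases he : lam = SPart.empty
    · subst he
      rw [if_pos rfl, if_pos (show (SPart.empty).weight = 0 from rfl), h0]
      norm_num
    · rw [if_neg (fun hc => he hc.symm),
        if_neg (fun hw => he ((weight_zero_iff lam).1 hw))]
  | succ n ih =>
    intro lam
    rw [D_rec n lam SPart.empty]
    by_cases hw : lam.weight = n + 1
    · rw [if_pos hw]
      have hne : lam ≠ SPart.empty := by
        intro hc
        rw [hc] at hw
        have : (SPart.empty).weight = 0 := rfl
        omega
      have e1 : ∀ k ∈ Finset.range (lam.1.length+1),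
          (if RemAt lam.pval k then DhatOp^[n] (deltaAt (down lam k)) SPart.empty else 0)
          = (if RemAt lam.pval k then ((d (down lam k) : ℂ)) else 0) := by
        intro k _
        by_cases h : RemAt lam.pval k
        · rw [if_pos h, if_pos h, ih (down lam k),
            if_pos (by have := weight_down h; omega)]
        · rw [if_neg h, if_neg h]
      rw [Finset.sum_congr rfl e1, ← Finset.sum_filter, hrec_finset d hrec hne]
      push_cast
      rfl
    · rw [if_neg hw]
      apply Finset.sum_eq_zero
      intro k _
      by_cases h : RemAt lam.pval k
      · rw [if_pos h, ih (down lam k), if_neg (by have := weight_down h; omega)]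
      · rw [if_neg h]

lemma remAt_last {lam : SPart} (h : lam ≠ SPart.empty) : RemAt lam.pval (lam.1.length - 1) := by
  have hlen : 0 < lam.1.length := by
    rcases Nat.eq_zero_or_pos lam.1.length with h0 | h1
    · exact absurd (Subtype.ext (List.length_eq_zero_iff.1 h0)) h
    · exact h1
  have h1 : 0 < lam.pval (lam.1.length - 1) := (pval_pos_iff _ _).2 (by omega)
  have h2 : lam.pval (lam.1.length - 1 + 1) = 0 := pval_eq_zero _ _ (by omega)
  unfold RemAt
  omega

lemma d_pos (d : SPart → ℕ) (h0 : d SPart.empty = 1)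
    (hrec : ∀ lam : SPart, lam ≠ SPart.empty →
      d lam = ∑ᶠ mu ∈ {mu : SPart | SPart.Covers mu lam}, d mu) :
    ∀ w (lam : SPart), lam.weight ≤ w → 0 < d lam := by
  intro w
  induction w with
  | zero =>
    intro lam hw
    rw [(weight_zero_iff lam).1 (by omega), h0]
    omega
  | succ w ih =>
    intro lam hw
    by_cases he : lam = SPart.empty
    · rw [he, h0]; omega
    · rw [hrec_finset d hrec he]
      have hk0 : lam.1.length - 1
          ∈ (Finset.range (lam.1.length+1)).filter (fun k => RemAt lam.pval k) := by
        simp only [Finset.mem_filter, Finset.mem_range]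
        exact ⟨by omega, remAt_last he⟩
      have hterm : 0 < d (down lam (lam.1.length - 1)) := by
        apply ih
        have := weight_down (remAt_last he)
        omega
      calc 0 < d (down lam (lam.1.length - 1)) := hterm
        _ ≤ _ := Finset.single_le_sum (f := fun k => d (down lam k)) (fun i _ => Nat.zero_le _) hk0

lemma Z_succ (α : ℂ) (n : ℕ) :
    Zconst α (n+1) = Zconst α n * (((n:ℂ)+1) * ((n:ℂ) + α/2)) := by
  unfold Zconst
  rw [ascPochhammer_succ_right, Nat.factorial_succ, Polynomial.eval_mul]
  push_cast
  simp only [Polynomial.eval_add, Polynomial.eval_X, Polynomial.eval_natCast]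
  ring

lemma Z_ne (α : ℂ) (hα : ∀ k : ℕ, α ≠ -(2 * (k:ℂ))) (n : ℕ) : Zconst α n ≠ 0 := by
  induction n with
  | zero =>
    unfold Zconst
    rw [ascPochhammer_zero]
    norm_num
  | succ n ih =>
    rw [Z_succ]
    apply mul_ne_zero ih
    apply mul_ne_zero
    · exact fun hc => Nat.cast_add_one_ne_zero n hc
    · intro hc
      apply hα n
      linear_combination 2 * hc

lemma up_inj {lam : SPart} {x y : ℕ} (hx : AddAt lam.pval x) (hy : AddAt lam.pval y)
    (h : up lam x = up lam y) : x = y := by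
  by_contra hne
  have h1 := congrFun (congrArg pval h) x
  rw [pval_up hx, pval_up hy, Function.update_self, Function.update_of_ne hne] at h1
  omega

end
end SPart

/-- for `α ∉ {0,−2,−4,…}`, the measures `M_{α,n}` form a coherent
system: `M_n(λ) = Σ_{κ ↘ λ} M_{n+1}(κ) · dim_S(λ)/dim_S(κ)`, where `dim_S` is
the number of saturated chains from `∅` in the Schur graph. -/
theorem statement6 (α : ℂ) (hα : ∀ k : ℕ, α ≠ -(2 * (k : ℂ)))
    (d : SPart → ℕ) (h0 : d SPart.empty = 1)
    (hrec : ∀ lam : SPart, lam ≠ SPart.empty →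
      d lam = ∑ᶠ mu ∈ {mu : SPart | SPart.Covers mu lam}, d mu)
    (n : ℕ) (lam : SPart) (hw : lam.weight = n) :
    Mmeas α n lam =
      ∑ᶠ kap ∈ {kap : SPart | SPart.Covers lam kap},
        Mmeas α (n + 1) kap * ((d lam : ℂ) / (d kap : ℂ)) := by
  classical
  have hcov2 : {kap : SPart | SPart.Covers lam kap}
      = ↑(((Finset.range (lam.1.length+1)).filter (fun k => SPart.AddAt lam.pval k)).image
          (fun k => SPart.up lam k)) := by
    ext kap
    simp only [Set.mem_setOf_eq, Finset.coe_image, Set.mem_image, Finset.mem_coe,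
      Finset.mem_filter, Finset.mem_range, SPart.covers_iff]
    constructor
    · rintro ⟨k, h1, rfl⟩
      exact ⟨k, ⟨by have := SPart.addAt_le h1; omega, h1⟩, rfl⟩
    · rintro ⟨k, ⟨hk, h1⟩, rfl⟩
      exact ⟨k, h1, rfl⟩
  rw [hcov2, finsum_mem_coe_finset]
  rw [Finset.sum_image (by
    intro x hx y hy hxy
    simp only [Finset.mem_coe, Finset.mem_filter] at hx hy
    exact SPart.up_inj hx.2 hy.2 hxy)]
  have hterm : ∀ k ∈ (Finset.range (lam.1.length+1)).filter (fun k => SPart.AddAt lam.pval k),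
      Mmeas α (n+1) (SPart.up lam k) * ((d lam : ℂ) / (d (SPart.up lam k) : ℂ))
      = (Zconst α (n+1))⁻¹ * (d lam : ℂ)
          * ((UhatOp α)^[n+1] (deltaAt SPart.empty) (SPart.up lam k)) := by
    intro k hk
    simp only [Finset.mem_filter] at hk
    rw [Mmeas, SPart.Dcount d h0 hrec (n+1) (SPart.up lam k),
      if_pos (by rw [SPart.weight_up hk.2, hw])]
    have hdpos := SPart.d_pos d h0 hrec (SPart.up lam k).weight (SPart.up lam k) le_rfl
    have hdne : ((d (SPart.up lam k) : ℂ)) ≠ 0 := Nat.cast_ne_zero.2 (by omega)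
    have hcancel : ((d (SPart.up lam k) : ℂ)) * ((d lam : ℂ) / (d (SPart.up lam k) : ℂ))
        = (d lam : ℂ) := by
      field_simp
    linear_combination (Zconst α (n+1))⁻¹
      * ((UhatOp α)^[n+1] (deltaAt SPart.empty) (SPart.up lam k)) * hcancel
  rw [Finset.sum_congr rfl hterm, ← Finset.mul_sum]
  have hDh : ∑ k ∈ (Finset.range (lam.1.length+1)).filter (fun k => SPart.AddAt lam.pval k),
        (UhatOp α)^[n+1] (deltaAt SPart.empty) (SPart.up lam k)
      = DhatOp ((UhatOp α)^[n+1] (deltaAt SPart.empty)) lam := by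
    rw [SPart.Dhat_eval _ lam (lam.1.length+1) (by omega), Finset.sum_filter]
  rw [hDh, SPart.DU α n lam]
  rw [Mmeas, SPart.Dcount d h0 hrec n lam, if_pos hw]
  have hZn := SPart.Z_ne α hα n
  have hZn1 := SPart.Z_ne α hα (n+1)
  rw [SPart.Z_succ α n] at hZn1 ⊢
  have h2 : ((n:ℂ)+1) * ((n:ℂ) + α/2) ≠ 0 := by
    intro hc
    rw [hc, mul_zero] at hZn1
    exact hZn1 rfl
  rw [mul_inv]
  linear_combination -(Zconst α n)⁻¹ * ((UhatOp α)^[n] (deltaAt SPart.empty) lam)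
    * (d lam : ℂ) * (mul_inv_cancel₀ h2)
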